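/- The tree-adjoining-style grammar with initial trees S → (A, (T)→a), S → (B, (T)→b) and auxiliary trees T → (A, (T)→(T, a)), T → (B, (T)→(T, b)), where A → a and B → b are substitution trees and adjunction is only allowed at the marked nodes (T), generates exactly the copy language { w w : w ∈ {a,b}⁺ }. -/

import Mathlib

/-- Node labels of LTAG₀ trees: terminals, substitution leaves A↓, substitution
nonterminals, adjunction-marked nodes (T), unmarked adjunction nonterminals and
foot nodes T*. -/
inductive Lab (T NS NA : Type) where
  | term : T → Lab T NS NA        -- terminal leaf
  | substLeaf : NS → Lab T NS NA  -- A↓, awaiting substitution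
  | nonterm : NS → Lab T NS NA    -- substitution nonterminal (root/internal)
  | adj : NA → Lab T NS NA        -- (T), adjunction allowed here
  | anode : NA → Lab T NS NA      -- adjunction nonterminal, no adjunction mark
  | foot : NA → Lab T NS NA       -- T*, foot node of an auxiliary tree

/-- Finitely branching labelled trees. -/
inductive LTree (T NS NA : Type) where
  | node : Lab T NS NA → List (LTree T NS NA) → LTree T NS NA

namespace LTree

variable {T NS NA : Type}

def rootLabel : LTree T NS NA → Lab T NS NA
  | .node l _ => l

mutual
  /-- The yield of a tree: the sequence of terminals at its leaves. -/
  def yield : LTree T NS NA → List T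
    | .node (.term a) _ => [a]
    | .node (.substLeaf _) cs => yields cs
    | .node (.nonterm _) cs => yields cs
    | .node (.adj _) cs => yields cs
    | .node (.anode _) cs => yields cs
    | .node (.foot _) cs => yields cs
  def yields : List (LTree T NS NA) → List T
    | [] => []
    | t :: ts => yield t ++ yields ts
end

mutual
  /-- The number of terminal leaves of a tree. -/
  def termCount : LTree T NS NA → ℕ
    | .node (.term _) _ => 1
    | .node (.substLeaf _) cs => termCounts cs
    | .node (.nonterm _) cs => termCounts cs
    | .node (.adj _) cs => termCounts cs
    | .node (.anode _) cs => termCounts cs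
    | .node (.foot _) cs => termCounts cs
  def termCounts : List (LTree T NS NA) → ℕ
    | [] => 0
    | t :: ts => termCount t + termCounts ts
end

mutual
  /-- The number of foot nodes of a tree. -/
  def footCount : LTree T NS NA → ℕ
    | .node (.foot _) cs => 1 + footCounts cs
    | .node (.term _) cs => footCounts cs
    | .node (.substLeaf _) cs => footCounts cs
    | .node (.nonterm _) cs => footCounts cs
    | .node (.adj _) cs => footCounts cs
    | .node (.anode _) cs => footCounts cs
  def footCounts : List (LTree T NS NA) → ℕ
    | [] => 0
    | t :: ts => footCount t + footCounts ts
end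

mutual
  /-- A tree is complete when all of its leaves are terminal leaves. -/
  def Complete : LTree T NS NA → Prop
    | .node (.term _) cs => cs = []
    | .node (.substLeaf _) _ => False
    | .node (.foot _) _ => False
    | .node (.nonterm _) cs => cs ≠ [] ∧ CompleteList cs
    | .node (.adj _) cs => cs ≠ [] ∧ CompleteList cs
    | .node (.anode _) cs => cs ≠ [] ∧ CompleteList cs
  def CompleteList : List (LTree T NS NA) → Prop
    | [] => True
    | t :: ts => Complete t ∧ CompleteList ts
end

/-- The subtree relation. -/
inductive Subtree : LTree T NS NA → LTree T NS NA → Prop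
  | refl (t : LTree T NS NA) : Subtree t t
  | child {s u : LTree T NS NA} (l : Lab T NS NA) (cs : List (LTree T NS NA)) :
      u ∈ cs → Subtree s u → Subtree s (.node l cs)

/-- Substitution of the tree β (with root label `nonterm A`) for one
substitution leaf A↓. -/
inductive ReplaceSubst (β : LTree T NS NA) (A : NS) :
    LTree T NS NA → LTree T NS NA → Prop
  | here : rootLabel β = .nonterm A → ReplaceSubst β A (.node (.substLeaf A) []) β
  | step (l : Lab T NS NA) (pre post : List (LTree T NS NA)) {t t' : LTree T NS NA} :
      ReplaceSubst β A t t' →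
      ReplaceSubst β A (.node l (pre ++ t :: post)) (.node l (pre ++ t' :: post))

/-- Replacement of the foot node n* by the tree `sub`. -/
inductive FootReplace (n : NA) (sub : LTree T NS NA) :
    LTree T NS NA → LTree T NS NA → Prop
  | here : FootReplace n sub (.node (.foot n) []) sub
  | step (l : Lab T NS NA) (pre post : List (LTree T NS NA)) {t t' : LTree T NS NA} :
      FootReplace n sub t t' →
      FootReplace n sub (.node l (pre ++ t :: post)) (.node l (pre ++ t' :: post))

/-- Adjunction of the auxiliary(-derived) tree β (root `anode n`, with a foot
node n*) at one node marked (n): the marked node is replaced by β, and the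
original subtree below the node is spliced in at the foot of β. -/
inductive Adjoin (β : LTree T NS NA) : LTree T NS NA → LTree T NS NA → Prop
  | here (n : NA) (cs : List (LTree T NS NA)) {β' : LTree T NS NA} :
      rootLabel β = .anode n →
      FootReplace n (.node (.anode n) cs) β β' →
      Adjoin β (.node (.adj n) cs) β'
  | step (l : Lab T NS NA) (pre post : List (LTree T NS NA)) {t t' : LTree T NS NA} :
      Adjoin β t t' →
      Adjoin β (.node l (pre ++ t :: post)) (.node l (pre ++ t' :: post))

end LTree

/-- An LTAG₀ grammar: a start symbol, initial trees and auxiliary trees. -/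
structure LTAG0 (T NS NA : Type) where
  start : NS
  initial : Set (LTree T NS NA)
  auxTrees : Set (LTree T NS NA)

namespace LTAG0

variable {T NS NA : Type} (g : LTAG0 T NS NA)

/-- Well-formedness of an LTAG₀ grammar: finitely many elementary trees; every
elementary tree has exactly one terminal leaf; initial trees are rooted in
substitution nonterminals and have no foot node; every auxiliary tree is rooted
in an adjunction nonterminal and has exactly one foot node, labelled by the
same adjunction nonterminal as its root; and every adjunction node lies on the
path from the terminal leaf to the root (i.e. every subtree rooted at an
adjunction mark contains the terminal leaf). -/
def WellFormed : Prop :=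
  g.initial.Finite ∧ g.auxTrees.Finite ∧
  (∀ t ∈ g.initial ∪ g.auxTrees, LTree.termCount t = 1) ∧
  (∀ t ∈ g.initial, (∃ A : NS, LTree.rootLabel t = .nonterm A) ∧ LTree.footCount t = 0) ∧
  (∀ t ∈ g.auxTrees, ∃ n : NA, LTree.rootLabel t = .anode n ∧ LTree.footCount t = 1 ∧
      ∀ u, LTree.Subtree u t → ∀ m : NA, LTree.rootLabel u = .foot m → m = n) ∧
  (∀ t ∈ g.initial ∪ g.auxTrees, ∀ u, LTree.Subtree u t →
      (∃ n : NA, LTree.rootLabel u = .adj n) → 1 ≤ LTree.termCount u)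

/-- Derived trees: elementary trees closed under substitution and adjunction. -/
inductive Derived : LTree T NS NA → Prop
  | init {t} : t ∈ g.initial → Derived t
  | auxMem {t} : t ∈ g.auxTrees → Derived t
  | subst {t β t'} (A : NS) : Derived t → Derived β →
      LTree.ReplaceSubst β A t t' → Derived t'
  | adjoin {t β t'} : Derived t → Derived β →
      LTree.Adjoin β t t' → Derived t'

/-- The language generated by an LTAG₀ grammar: the yields of complete derived
trees rooted in the start symbol. -/
def language : Set (List T) :=
  {w | ∃ t, g.Derived t ∧ LTree.rootLabel t = .nonterm g.start ∧
        LTree.Complete t ∧ LTree.yield t = w}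

end LTAG0

/-- Substitution nonterminals of the copy grammar. -/
inductive NS3 where
  | S | A | B
  deriving DecidableEq

open LTree Lab in
/-- The copy grammar: initial trees S → (A↓, (T)→a), S → (B↓, (T)→b) and the
substitution trees A → a, B → b; auxiliary trees T → (A↓, (T)→(T*, a)),
T → (B↓, (T)→(T*, b)).  Terminals: 0 = a, 1 = b; there is a single adjunction
nonterminal T. -/
def copyGrammar : LTAG0 (Fin 2) NS3 Unit where
  start := NS3.S
  initial :=
    { LTree.node (.nonterm NS3.S)
        [LTree.node (.substLeaf NS3.A) [],
         LTree.node (.adj ()) [LTree.node (.term 0) []]],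
      LTree.node (.nonterm NS3.S)
        [LTree.node (.substLeaf NS3.B) [],
         LTree.node (.adj ()) [LTree.node (.term 1) []]],
      LTree.node (.nonterm NS3.A) [LTree.node (.term 0) []],
      LTree.node (.nonterm NS3.B) [LTree.node (.term 1) []] }
  auxTrees :=
    { LTree.node (.anode ())
        [LTree.node (.substLeaf NS3.A) [],
         LTree.node (.adj ()) [LTree.node (.foot ()) [], LTree.node (.term 0) []]],
      LTree.node (.anode ())
        [LTree.node (.substLeaf NS3.B) [],
         LTree.node (.adj ()) [LTree.node (.foot ()) [], LTree.node (.term 1) []]] }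

/-! ### Auxiliary development for the copy grammar -/

namespace CopyAux

open LTree

abbrev Tr := LTree (Fin 2) NS3 Unit

/-- The terminal leaf for letter `c`. -/
def leafT (c : Fin 2) : Tr := .node (.term c) []

/-- The substitution nonterminal associated to a letter. -/
def NSof : Fin 2 → NS3
  | 0 => NS3.A
  | 1 => NS3.B

lemma NSof_injective : Function.Injective NSof := by
  decide

lemma NSof_ne_S (c : Fin 2) : NSof c ≠ NS3.S := by
  fin_cases c <;> simp [NSof]

/-- The substitution tree `A → a` resp. `B → b`. -/
def subT (c : Fin 2) : Tr := .node (.nonterm (NSof c)) [leafT c]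

/-- A substitution leaf `A↓` resp. `B↓`. -/
def slf (c : Fin 2) : Tr := .node (.substLeaf (NSof c)) []

/-- The foot node. -/
def footT : Tr := .node (.foot ()) []

/-- A substitution slot: either still a substitution leaf, or already filled. -/
inductive IsX : Fin 2 → Tr → Prop
  | leaf (c : Fin 2) : IsX c (slf c)
  | full (c : Fin 2) : IsX c (subT c)

/-- Shapes of trees derived from auxiliary trees, with hole `h` at the place of
the original foot node; `v` is the word of letters along the spine. -/
inductive Go : List (Fin 2) → Tr → Tr → Prop
  | single (c : Fin 2) (x h : Tr) : IsX c x →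
      Go [c] h (.node (.anode ()) [x, .node (.adj ()) [h, leafT c]])
  | cons (c : Fin 2) (x : Tr) (v : List (Fin 2)) (h t : Tr) : IsX c x →
      Go v (.node (.anode ()) [h, leafT c]) t →
      Go (c :: v) h (.node (.anode ()) [x, t])

/-- Shapes of trees derived from initial `S`-trees. -/
inductive SShape : Tr → Prop
  | base (c : Fin 2) (x : Tr) : IsX c x →
      SShape (.node (.nonterm NS3.S) [x, .node (.adj ()) [leafT c]])
  | adjoined (c : Fin 2) (x : Tr) (v : List (Fin 2)) (t : Tr) : IsX c x →
      Go v (.node (.anode ()) [leafT c]) t →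
      SShape (.node (.nonterm NS3.S) [x, t])

/-- Shape invariant for all derived trees of the copy grammar. -/
def Shape (t : Tr) : Prop :=
  (∃ c, t = subT c) ∨ SShape t ∨ (∃ v, Go v footT t)

/-- Holes occurring in `Go` shapes. -/
inductive GoodHole : Tr → Prop
  | foot : GoodHole footT
  | base (c : Fin 2) : GoodHole (.node (.anode ()) [leafT c])
  | cons (c : Fin 2) (h : Tr) : GoodHole h →
      GoodHole (.node (.anode ()) [h, leafT c])

section ListHelpers

variable {α : Type*}

lemma eq_nil_helper {pre post : List α} {t : α} (h : pre ++ t :: post = []) : False := by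
  cases pre <;> simp_all

lemma eq_single_helper {pre post : List α} {t a : α} (h : pre ++ t :: post = [a]) :
    pre = [] ∧ t = a ∧ post = [] := by
  rcases pre with _ | ⟨x, _ | ⟨y, l⟩⟩ <;> simp_all

lemma eq_pair_helper {pre post : List α} {t a b : α} (h : pre ++ t :: post = [a, b]) :
    (pre = [] ∧ t = a ∧ post = [b]) ∨ (pre = [a] ∧ t = b ∧ post = []) := by
  rcases pre with _ | ⟨x, _ | ⟨y, _ | ⟨z, l⟩⟩⟩ <;> simp_all

end ListHelpers

/-! #### Inversion lemmas -/

lemma rs_inv {β : Tr} {A : NS3} {l : Lab (Fin 2) NS3 Unit} {cs : List Tr} {t' : Tr}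
    (h : ReplaceSubst β A (.node l cs) t') :
    (l = .substLeaf A ∧ cs = [] ∧ t' = β ∧ rootLabel β = .nonterm A) ∨
    (∃ pre post u u', cs = pre ++ u :: post ∧ t' = .node l (pre ++ u' :: post) ∧
      ReplaceSubst β A u u') := by
  cases h with
  | here hr => exact Or.inl ⟨rfl, rfl, rfl, hr⟩
  | step l pre post h' => exact Or.inr ⟨pre, post, _, _, rfl, rfl, h'⟩

lemma fr_inv {n : Unit} {s : Tr} {l : Lab (Fin 2) NS3 Unit} {cs : List Tr} {t' : Tr}
    (h : FootReplace n s (.node l cs) t') :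
    (l = .foot n ∧ cs = [] ∧ t' = s) ∨
    (∃ pre post u u', cs = pre ++ u :: post ∧ t' = .node l (pre ++ u' :: post) ∧
      FootReplace n s u u') := by
  cases h with
  | here => exact Or.inl ⟨rfl, rfl, rfl⟩
  | step l pre post h' => exact Or.inr ⟨pre, post, _, _, rfl, rfl, h'⟩

lemma adj_inv {β : Tr} {l : Lab (Fin 2) NS3 Unit} {cs : List Tr} {t' : Tr}
    (h : Adjoin β (.node l cs) t') :
    (∃ n, l = .adj n ∧ rootLabel β = .anode n ∧
      FootReplace n (.node (.anode n) cs) β t') ∨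
    (∃ pre post u u', cs = pre ++ u :: post ∧ t' = .node l (pre ++ u' :: post) ∧
      Adjoin β u u') := by
  cases h with
  | here n cs hr hf => exact Or.inl ⟨n, rfl, hr, hf⟩
  | step l pre post h' => exact Or.inr ⟨pre, post, _, _, rfl, rfl, h'⟩

/-! #### No-action lemmas on small trees -/

lemma noRS_leaf {β : Tr} {A : NS3} {c : Fin 2} {t' : Tr}
    (h : ReplaceSubst β A (leafT c) t') : False := by
  rcases rs_inv h with ⟨h1, -⟩ | ⟨pre, post, u, u', hcs, -⟩
  · simp at h1
  · exact eq_nil_helper hcs.symm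

lemma noRS_subT {β : Tr} {A : NS3} {c : Fin 2} {t' : Tr}
    (h : ReplaceSubst β A (subT c) t') : False := by
  rcases rs_inv h with ⟨h1, -⟩ | ⟨pre, post, u, u', hcs, -, hu⟩
  · simp at h1
  · obtain ⟨rfl, rfl, rfl⟩ := eq_single_helper hcs.symm
    exact noRS_leaf hu

lemma RS_slf {β : Tr} {A : NS3} {c : Fin 2} {t' : Tr}
    (h : ReplaceSubst β A (slf c) t') :
    A = NSof c ∧ t' = β ∧ rootLabel β = .nonterm (NSof c) := by
  rcases rs_inv h with ⟨h1, -, rfl, h2⟩ | ⟨pre, post, u, u', hcs, -⟩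
  · obtain rfl : NSof c = A := by simpa [slf] using h1
    exact ⟨rfl, rfl, h2⟩
  · exact absurd hcs.symm (fun hh => eq_nil_helper hh)

lemma noAdj_leaf {β : Tr} {c : Fin 2} {t' : Tr}
    (h : Adjoin β (leafT c) t') : False := by
  rcases adj_inv h with ⟨n, h1, -⟩ | ⟨pre, post, u, u', hcs, -⟩
  · simp at h1
  · exact eq_nil_helper hcs.symm

lemma noAdj_slf {β : Tr} {c : Fin 2} {t' : Tr}
    (h : Adjoin β (slf c) t') : False := by
  rcases adj_inv h with ⟨n, h1, -⟩ | ⟨pre, post, u, u', hcs, -⟩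
  · simp [slf] at h1
  · exact eq_nil_helper hcs.symm

lemma noAdj_subT {β : Tr} {c : Fin 2} {t' : Tr}
    (h : Adjoin β (subT c) t') : False := by
  rcases adj_inv h with ⟨n, h1, -⟩ | ⟨pre, post, u, u', hcs, -, hu⟩
  · simp [subT] at h1
  · obtain ⟨rfl, rfl, rfl⟩ := eq_single_helper hcs.symm
    exact noAdj_leaf hu

lemma noAdj_IsX {β x : Tr} {c : Fin 2} {t' : Tr} (hx : IsX c x)
    (h : Adjoin β x t') : False := by
  cases hx with
  | leaf => exact noAdj_slf h
  | full => exact noAdj_subT h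

lemma noRS_IsX {β x : Tr} {A : NS3} {c : Fin 2} {t' : Tr} (hx : IsX c x)
    (h : ReplaceSubst β A x t') :
    A = NSof c ∧ x = slf c ∧ t' = β := by
  cases hx with
  | leaf => obtain ⟨h1, h2, -⟩ := RS_slf h; exact ⟨h1, rfl, h2⟩
  | full => exact absurd h noRS_subT

lemma noFR_leaf {n : Unit} {s : Tr} {c : Fin 2} {t' : Tr}
    (h : FootReplace n s (leafT c) t') : False := by
  rcases fr_inv h with ⟨h1, -⟩ | ⟨pre, post, u, u', hcs, -⟩
  · simp at h1
  · exact eq_nil_helper hcs.symm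

lemma noFR_slf {n : Unit} {s : Tr} {c : Fin 2} {t' : Tr}
    (h : FootReplace n s (slf c) t') : False := by
  rcases fr_inv h with ⟨h1, -⟩ | ⟨pre, post, u, u', hcs, -⟩
  · simp [slf] at h1
  · exact eq_nil_helper hcs.symm

lemma noFR_subT {n : Unit} {s : Tr} {c : Fin 2} {t' : Tr}
    (h : FootReplace n s (subT c) t') : False := by
  rcases fr_inv h with ⟨h1, -⟩ | ⟨pre, post, u, u', hcs, -, hu⟩
  · simp [subT] at h1
  · obtain ⟨rfl, rfl, rfl⟩ := eq_single_helper hcs.symm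
    exact noFR_leaf hu

lemma noFR_IsX {n : Unit} {s x : Tr} {c : Fin 2} {t' : Tr} (hx : IsX c x)
    (h : FootReplace n s x t') : False := by
  cases hx with
  | leaf => exact noFR_slf h
  | full => exact noFR_subT h

lemma FR_foot {n : Unit} {s t' : Tr} (h : FootReplace n s footT t') : t' = s := by
  rcases fr_inv h with ⟨-, -, rfl⟩ | ⟨pre, post, u, u', hcs, -⟩
  · rfl
  · exact absurd hcs.symm (fun hh => eq_nil_helper hh)

lemma goodHole_noRS {β h : Tr} {A : NS3} {h' : Tr} (hh : GoodHole h)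
    (hr : ReplaceSubst β A h h') : False := by
  induction hh generalizing h' with
  | foot =>
    rcases rs_inv hr with ⟨h1, -⟩ | ⟨pre, post, u, u', hcs, -⟩
    · simp at h1
    · exact eq_nil_helper hcs.symm
  | base c =>
    rcases rs_inv hr with ⟨h1, -⟩ | ⟨pre, post, u, u', hcs, -, hu⟩
    · simp at h1
    · obtain ⟨rfl, rfl, rfl⟩ := eq_single_helper hcs.symm
      exact noRS_leaf hu
  | cons c h hh ih =>
    rcases rs_inv hr with ⟨h1, -⟩ | ⟨pre, post, u, u', hcs, -, hu⟩
    · simp at h1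
    · rcases eq_pair_helper hcs.symm with ⟨rfl, rfl, rfl⟩ | ⟨rfl, rfl, rfl⟩
      · exact ih hu
      · exact noRS_leaf hu

lemma goodHole_noAdj {β h : Tr} {h' : Tr} (hh : GoodHole h)
    (hr : Adjoin β h h') : False := by
  induction hh generalizing h' with
  | foot =>
    rcases adj_inv hr with ⟨n, h1, -⟩ | ⟨pre, post, u, u', hcs, -⟩
    · simp at h1
    · exact eq_nil_helper hcs.symm
  | base c =>
    rcases adj_inv hr with ⟨n, h1, -⟩ | ⟨pre, post, u, u', hcs, -, hu⟩
    · simp at h1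
    · obtain ⟨rfl, rfl, rfl⟩ := eq_single_helper hcs.symm
      exact noAdj_leaf hu
  | cons c h hh ih =>
    rcases adj_inv hr with ⟨n, h1, -⟩ | ⟨pre, post, u, u', hcs, -, hu⟩
    · simp at h1
    · rcases eq_pair_helper hcs.symm with ⟨rfl, rfl, rfl⟩ | ⟨rfl, rfl, rfl⟩
      · exact ih hu
      · exact noAdj_leaf hu

/-! #### Root labels -/

lemma go_root {v : List (Fin 2)} {h t : Tr} (hg : Go v h t) :
    rootLabel t = .anode () := by
  cases hg <;> rfl

lemma s_root {t : Tr} (hs : SShape t) : rootLabel t = .nonterm NS3.S := by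
  cases hs <;> rfl

lemma rs_root {β : Tr} {A : NS3} {t t' : Tr} (h : ReplaceSubst β A t t') :
    rootLabel β = .nonterm A := by
  induction h with
  | here hr => exact hr
  | step => assumption

lemma adj_root {β : Tr} {t t' : Tr} (h : Adjoin β t t') :
    rootLabel β = .anode () := by
  induction h with
  | here n cs hr _ => exact hr
  | step => assumption

/-! #### Foot replacement in `Go` shapes -/

lemma frGo {v : List (Fin 2)} {h t : Tr} (hg : Go v h t) {n : Unit} {s t' : Tr}
    (hf : FootReplace n s t t') :
    ∃ h', FootReplace n s h h' ∧ Go v h' t' := by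
  induction hg generalizing t' with
  | single c x h hx =>
    rcases fr_inv hf with ⟨h1, -⟩ | ⟨pre, post, u, u', hcs, rfl, hu⟩
    · simp at h1
    · rcases eq_pair_helper hcs.symm with ⟨rfl, rfl, rfl⟩ | ⟨rfl, rfl, rfl⟩
      · exact absurd hu (noFR_IsX hx)
      · rcases fr_inv hu with ⟨h1, -⟩ | ⟨pre, post, u, u', hcs, rfl, hu2⟩
        · simp at h1
        · rcases eq_pair_helper hcs.symm with ⟨rfl, rfl, rfl⟩ | ⟨rfl, rfl, rfl⟩
          · exact ⟨_, hu2, Go.single c x _ hx⟩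
          · exact absurd hu2 noFR_leaf
  | cons c x v h t hx hg ih =>
    rcases fr_inv hf with ⟨h1, -⟩ | ⟨pre, post, u, u', hcs, rfl, hu⟩
    · simp at h1
    · rcases eq_pair_helper hcs.symm with ⟨rfl, rfl, rfl⟩ | ⟨rfl, rfl, rfl⟩
      · exact absurd hu (noFR_IsX hx)
      · obtain ⟨h2, hf2, hg2⟩ := ih hu
        rcases fr_inv hf2 with ⟨h1, -⟩ | ⟨pre, post, u, u', hcs, rfl, hu2⟩
        · simp at h1
        · rcases eq_pair_helper hcs.symm with ⟨rfl, rfl, rfl⟩ | ⟨rfl, rfl, rfl⟩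
          · exact ⟨_, hu2, Go.cons c x v _ _ hx hg2⟩
          · exact absurd hu2 noFR_leaf

/-! #### Substitution into shapes -/

lemma go_rs {v : List (Fin 2)} {h t : Tr} (hg : Go v h t) (hh : GoodHole h)
    {β : Tr} {A : NS3} {t' : Tr} (hr : ReplaceSubst β A t t') :
    ∃ c, A = NSof c ∧ (β = subT c → Go v h t') := by
  induction hg generalizing t' with
  | single c x h hx =>
    rcases rs_inv hr with ⟨h1, -⟩ | ⟨pre, post, u, u', hcs, rfl, hu⟩
    · simp at h1
    · rcases eq_pair_helper hcs.symm with ⟨rfl, rfl, rfl⟩ | ⟨rfl, rfl, rfl⟩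
      · obtain ⟨rfl, rfl, rfl⟩ := noRS_IsX hx hu
        exact ⟨c, rfl, fun hb => hb ▸ Go.single c _ _ (IsX.full c)⟩
      · rcases rs_inv hu with ⟨h1, -⟩ | ⟨pre, post, u, u', hcs, rfl, hu2⟩
        · simp at h1
        · rcases eq_pair_helper hcs.symm with ⟨rfl, rfl, rfl⟩ | ⟨rfl, rfl, rfl⟩
          · exact absurd hu2 (fun h2 => goodHole_noRS hh h2)
          · exact absurd hu2 noRS_leaf
  | cons c x v h t hx hg ih =>
    rcases rs_inv hr with ⟨h1, -⟩ | ⟨pre, post, u, u', hcs, rfl, hu⟩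
    · simp at h1
    · rcases eq_pair_helper hcs.symm with ⟨rfl, rfl, rfl⟩ | ⟨rfl, rfl, rfl⟩
      · obtain ⟨rfl, rfl, rfl⟩ := noRS_IsX hx hu
        exact ⟨c, rfl, fun hb => hb ▸ Go.cons c _ v _ _ (IsX.full c) hg⟩
      · obtain ⟨c', hc', hgo⟩ := ih (GoodHole.cons c h hh) hu
        exact ⟨c', hc', fun hb => Go.cons c x v h _ hx (hgo hb)⟩

lemma s_rs {t : Tr} (hs : SShape t) {β : Tr} {A : NS3} {t' : Tr}
    (hr : ReplaceSubst β A t t') :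
    ∃ c, A = NSof c ∧ (β = subT c → SShape t') := by
  cases hs with
  | base c x hx =>
    rcases rs_inv hr with ⟨h1, -⟩ | ⟨pre, post, u, u', hcs, rfl, hu⟩
    · simp at h1
    · rcases eq_pair_helper hcs.symm with ⟨rfl, rfl, rfl⟩ | ⟨rfl, rfl, rfl⟩
      · obtain ⟨rfl, rfl, rfl⟩ := noRS_IsX hx hu
        exact ⟨c, rfl, fun hb => hb ▸ SShape.base c _ (IsX.full c)⟩
      · rcases rs_inv hu with ⟨h1, -⟩ | ⟨pre, post, u, u', hcs, rfl, hu2⟩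
        · simp at h1
        · obtain ⟨rfl, rfl, rfl⟩ := eq_single_helper hcs.symm
          exact absurd hu2 noRS_leaf
  | adjoined c x v t hx hg =>
    rcases rs_inv hr with ⟨h1, -⟩ | ⟨pre, post, u, u', hcs, rfl, hu⟩
    · simp at h1
    · rcases eq_pair_helper hcs.symm with ⟨rfl, rfl, rfl⟩ | ⟨rfl, rfl, rfl⟩
      · obtain ⟨rfl, rfl, rfl⟩ := noRS_IsX hx hu
        exact ⟨c, rfl, fun hb => hb ▸ SShape.adjoined c _ v _ (IsX.full c) hg⟩
      · obtain ⟨c', hc', hgo⟩ := go_rs hg (GoodHole.base c) hu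
        exact ⟨c', hc', fun hb => SShape.adjoined c x v _ hx (hgo hb)⟩

/-! #### Adjunction into shapes -/

lemma go_adj {v : List (Fin 2)} {h t : Tr} (hg : Go v h t) (hh : GoodHole h)
    {β : Tr} {w : List (Fin 2)} (hβ : Go w footT β) {t' : Tr}
    (ha : Adjoin β t t') : Go (v ++ w) h t' := by
  induction hg generalizing t' with
  | single c x h hx =>
    rcases adj_inv ha with ⟨n, h1, -⟩ | ⟨pre, post, u, u', hcs, rfl, hu⟩
    · simp at h1
    · rcases eq_pair_helper hcs.symm with ⟨rfl, rfl, rfl⟩ | ⟨rfl, rfl, rfl⟩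
      · exact absurd hu (noAdj_IsX hx)
      · rcases adj_inv hu with ⟨n, -, hroot, hfr⟩ | ⟨pre, post, u, u', hcs, rfl, hu2⟩
        · obtain ⟨h', hf', hg'⟩ := frGo hβ hfr
          rw [FR_foot hf'] at hg'
          exact Go.cons c x w h _ hx hg'
        · rcases eq_pair_helper hcs.symm with ⟨rfl, rfl, rfl⟩ | ⟨rfl, rfl, rfl⟩
          · exact absurd hu2 (fun h2 => goodHole_noAdj hh h2)
          · exact absurd hu2 noAdj_leaf
  | cons c x v h t hx hg ih =>
    rcases adj_inv ha with ⟨n, h1, -⟩ | ⟨pre, post, u, u', hcs, rfl, hu⟩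
    · simp at h1
    · rcases eq_pair_helper hcs.symm with ⟨rfl, rfl, rfl⟩ | ⟨rfl, rfl, rfl⟩
      · exact absurd hu (noAdj_IsX hx)
      · exact Go.cons c x (v ++ w) h _ hx (ih (GoodHole.cons c h hh) hu)

lemma s_adj {t : Tr} (hs : SShape t) {β : Tr} {w : List (Fin 2)}
    (hβ : Go w footT β) {t' : Tr} (ha : Adjoin β t t') : SShape t' := by
  cases hs with
  | base c x hx =>
    rcases adj_inv ha with ⟨n, h1, -⟩ | ⟨pre, post, u, u', hcs, rfl, hu⟩
    · simp at h1
    · rcases eq_pair_helper hcs.symm with ⟨rfl, rfl, rfl⟩ | ⟨rfl, rfl, rfl⟩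
      · exact absurd hu (noAdj_IsX hx)
      · rcases adj_inv hu with ⟨n, -, hroot, hfr⟩ | ⟨pre, post, u, u', hcs, rfl, hu2⟩
        · obtain ⟨h', hf', hg'⟩ := frGo hβ hfr
          rw [FR_foot hf'] at hg'
          exact SShape.adjoined c x w _ hx hg'
        · obtain ⟨rfl, rfl, rfl⟩ := eq_single_helper hcs.symm
          exact absurd hu2 noAdj_leaf
  | adjoined c x v t hx hg =>
    rcases adj_inv ha with ⟨n, h1, -⟩ | ⟨pre, post, u, u', hcs, rfl, hu⟩
    · simp at h1
    · rcases eq_pair_helper hcs.symm with ⟨rfl, rfl, rfl⟩ | ⟨rfl, rfl, rfl⟩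
      · exact absurd hu (noAdj_IsX hx)
      · exact SShape.adjoined c x (v ++ w) _ hx (go_adj hg (GoodHole.base c) hβ hu)

/-! #### Every derived tree has one of the shapes -/

lemma shape_of_root_anode {β : Tr} (hs : Shape β)
    (hr : rootLabel β = .anode ()) : ∃ w, Go w footT β := by
  rcases hs with ⟨c, rfl⟩ | hs | hs
  · simp [subT, rootLabel] at hr
  · rw [s_root hs] at hr; cases hr
  · exact hs

lemma shape_of_root_nonterm {β : Tr} (hs : Shape β) {A : NS3}
    (hr : rootLabel β = .nonterm A) (hA : A ≠ NS3.S) : ∃ c, A = NSof c ∧ β = subT c := by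
  rcases hs with ⟨c, rfl⟩ | hs | ⟨w, hs⟩
  · refine ⟨c, ?_, rfl⟩
    simpa [subT, rootLabel] using hr.symm
  · rw [s_root hs] at hr
    cases hr; exact absurd rfl hA
  · rw [go_root hs] at hr; cases hr

lemma derived_shape {t : Tr} (hd : copyGrammar.Derived t) : Shape t := by
  induction hd with
  | init hmem =>
    simp only [copyGrammar, Set.mem_insert_iff, Set.mem_singleton_iff] at hmem
    rcases hmem with rfl | rfl | rfl | rfl
    · exact Or.inr (Or.inl (SShape.base 0 _ (IsX.leaf 0)))
    · exact Or.inr (Or.inl (SShape.base 1 _ (IsX.leaf 1)))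
    · exact Or.inl ⟨0, rfl⟩
    · exact Or.inl ⟨1, rfl⟩
  | auxMem hmem =>
    simp only [copyGrammar, Set.mem_insert_iff, Set.mem_singleton_iff] at hmem
    rcases hmem with rfl | rfl
    · exact Or.inr (Or.inr ⟨[0], Go.single 0 _ _ (IsX.leaf 0)⟩)
    · exact Or.inr (Or.inr ⟨[1], Go.single 1 _ _ (IsX.leaf 1)⟩)
  | subst A _ _ hr iht ihβ =>
    have hroot := rs_root hr
    rcases iht with ⟨c, rfl⟩ | hs | ⟨v, hg⟩
    · exact absurd hr noRS_subT
    · obtain ⟨c, rfl, hgo⟩ := s_rs hs hr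
      obtain ⟨c', hc', rfl⟩ := shape_of_root_nonterm ihβ hroot (NSof_ne_S c)
      obtain rfl := NSof_injective hc'.symm
      exact Or.inr (Or.inl (hgo rfl))
    · obtain ⟨c, rfl, hgo⟩ := go_rs hg GoodHole.foot hr
      obtain ⟨c', hc', rfl⟩ := shape_of_root_nonterm ihβ hroot (NSof_ne_S c)
      obtain rfl := NSof_injective hc'.symm
      exact Or.inr (Or.inr ⟨v, hgo rfl⟩)
  | adjoin _ _ ha iht ihβ =>
    obtain ⟨w, hβ⟩ := shape_of_root_anode ihβ (adj_root ha)
    rcases iht with ⟨c, rfl⟩ | hs | ⟨v, hg⟩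
    · exact absurd ha noAdj_subT
    · exact Or.inr (Or.inl (s_adj hs hβ ha))
    · exact Or.inr (Or.inr ⟨v ++ w, go_adj hg GoodHole.foot hβ ha⟩)

/-! #### Yields of complete shaped trees -/

lemma complete_IsX {c : Fin 2} {x : Tr} (hx : IsX c x) (hc : Complete x) :
    x = subT c := by
  cases hx with
  | leaf => simp [slf, Complete] at hc
  | full => rfl

lemma yield_subT (c : Fin 2) : yield (subT c) = [c] := by
  simp [subT, leafT, yield, yields]

lemma go_yield {v : List (Fin 2)} {h t : Tr} (hg : Go v h t) (hc : Complete t) :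
    yield t = v ++ yield h ++ v := by
  induction hg with
  | single c x h hx =>
    simp only [Complete, CompleteList] at hc
    obtain ⟨-, hcx, ⟨-, hch, -⟩, -⟩ := hc
    obtain rfl := complete_IsX hx hcx
    simp [yield, yields, subT, leafT]
  | cons c x v h t hx hg ih =>
    simp only [Complete, CompleteList] at hc
    obtain ⟨-, hcx, hct, -⟩ := hc
    obtain rfl := complete_IsX hx hcx
    have hy := ih hct
    have : yield (LTree.node (.anode ()) [h, leafT c] : Tr) = yield h ++ [c] := by
      simp [yield, yields, leafT]
    rw [this] at hy
    simp [yield, yields, subT, leafT, hy]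

/-! #### Construction of the canonical derived trees -/

/-- The canonical fully substituted spine tree for spine word `v` and hole `h`. -/
def goT : List (Fin 2) → Tr → Tr
  | [], h => h
  | [c], h => .node (.anode ()) [subT c, .node (.adj ()) [h, leafT c]]
  | c :: d :: v, h =>
      .node (.anode ()) [subT c, goT (d :: v) (.node (.anode ()) [h, leafT c])]

lemma goT_fr {n : Unit} {s h h' : Tr} (hf : FootReplace n s h h') :
    ∀ v : List (Fin 2), v ≠ [] → FootReplace n s (goT v h) (goT v h')
  | [], hv => absurd rfl hv
  | [c], _ => by
    simpa [goT] using
      FootReplace.step (T := Fin 2) (.anode ()) [subT c] []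
        (FootReplace.step (.adj ()) [] [leafT c] hf)
  | c :: d :: v, _ => by
    have ih := goT_fr (FootReplace.step (T := Fin 2) (.anode ()) [] [leafT c] hf)
      (d :: v) (by simp)
    simpa [goT] using FootReplace.step (T := Fin 2) (.anode ()) [subT c] [] ih

lemma goT_root {v : List (Fin 2)} (hv : v ≠ []) {h : Tr} :
    rootLabel (goT v h) = .anode () := by
  match v with
  | [c] => rfl
  | c :: d :: v => rfl

lemma goT_derived : ∀ v : List (Fin 2), v ≠ [] → copyGrammar.Derived (goT v footT)
  | [c], _ => by
    have hmem : (LTree.node (.anode ())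
        [slf c, LTree.node (.adj ()) [footT, leafT c]] : Tr) ∈ copyGrammar.auxTrees := by
      fin_cases c
      · exact Or.inl rfl
      · exact Or.inr rfl
    have hsub : (subT c : Tr) ∈ copyGrammar.initial := by
      fin_cases c
      · exact Or.inr (Or.inr (Or.inl rfl))
      · exact Or.inr (Or.inr (Or.inr rfl))
    have hrs : ReplaceSubst (subT c) (NSof c)
        (LTree.node (.anode ()) [slf c, LTree.node (.adj ()) [footT, leafT c]])
        (goT [c] footT) := by
      simpa [goT, slf] using
        ReplaceSubst.step (T := Fin 2) (β := subT c) (A := NSof c) (.anode ()) []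
          [LTree.node (.adj ()) [footT, leafT c]] (ReplaceSubst.here rfl)
    exact LTAG0.Derived.subst (NSof c) (LTAG0.Derived.auxMem hmem)
      (LTAG0.Derived.init hsub) hrs
  | c :: d :: v, _ => by
    have ihd := goT_derived (d :: v) (by simp)
    have h1 := goT_derived [c] (by simp)
    have hadj : Adjoin (goT (d :: v) footT) (goT [c] footT) (goT (c :: d :: v) footT) := by
      have hfr : FootReplace () (LTree.node (.anode ()) [footT, leafT c])
          (goT (d :: v) footT) (goT (d :: v) (LTree.node (.anode ()) [footT, leafT c])) :=
        goT_fr FootReplace.here (d :: v) (by simp)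
      have hh : Adjoin (goT (d :: v) footT)
          (LTree.node (.adj ()) [footT, leafT c])
          (goT (d :: v) (LTree.node (.anode ()) [footT, leafT c])) :=
        Adjoin.here () [footT, leafT c] (goT_root (by simp)) hfr
      simpa [goT] using
        Adjoin.step (T := Fin 2) (.anode ()) [subT c] [] hh
    exact LTAG0.Derived.adjoin h1 ihd hadj

/-- The canonical complete derived tree for the word `c :: v`. -/
def fullT (c : Fin 2) (v : List (Fin 2)) : Tr :=
  .node (.nonterm NS3.S)
    [subT c, if v = [] then .node (.adj ()) [leafT c]
      else goT v (.node (.anode ()) [leafT c])]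

lemma fullT_base_derived (c : Fin 2) : copyGrammar.Derived (fullT c []) := by
  have hmem : (LTree.node (.nonterm NS3.S)
      [slf c, LTree.node (.adj ()) [leafT c]] : Tr) ∈ copyGrammar.initial := by
    fin_cases c
    · exact Or.inl rfl
    · exact Or.inr (Or.inl rfl)
  have hsub : (subT c : Tr) ∈ copyGrammar.initial := by
    fin_cases c
    · exact Or.inr (Or.inr (Or.inl rfl))
    · exact Or.inr (Or.inr (Or.inr rfl))
  have hrs : ReplaceSubst (subT c) (NSof c)
      (LTree.node (.nonterm NS3.S) [slf c, LTree.node (.adj ()) [leafT c]])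
      (fullT c []) := by
    simpa [fullT, slf] using
      ReplaceSubst.step (T := Fin 2) (β := subT c) (A := NSof c) (.nonterm NS3.S) []
        [LTree.node (.adj ()) [leafT c]] (ReplaceSubst.here rfl)
  exact LTAG0.Derived.subst (NSof c) (LTAG0.Derived.init hmem)
    (LTAG0.Derived.init hsub) hrs

lemma fullT_derived (c : Fin 2) (v : List (Fin 2)) :
    copyGrammar.Derived (fullT c v) := by
  rcases eq_or_ne v [] with rfl | hv
  · exact fullT_base_derived c
  · have h1 := fullT_base_derived c
    have h2 := goT_derived v hv
    have hfr : FootReplace () (LTree.node (.anode ()) [leafT c])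
        (goT v footT) (goT v (LTree.node (.anode ()) [leafT c])) :=
      goT_fr FootReplace.here v hv
    have hh : Adjoin (goT v footT) (LTree.node (.adj ()) [leafT c])
        (goT v (LTree.node (.anode ()) [leafT c])) :=
      Adjoin.here () [leafT c] (goT_root hv) hfr
    have hadj : Adjoin (goT v footT) (fullT c []) (fullT c v) := by
      simp only [fullT, if_pos rfl, if_neg hv]
      exact Adjoin.step (.nonterm NS3.S) [subT c] [] hh
    exact LTAG0.Derived.adjoin h1 h2 hadj

lemma complete_subT (c : Fin 2) : Complete (subT c) := by
  constructor
  · simp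
  · exact ⟨rfl, trivial⟩

lemma goT_complete : ∀ (v : List (Fin 2)), v ≠ [] → ∀ (h : Tr), Complete h →
    Complete (goT v h)
  | [c], _, h, hc => by
    refine ⟨by simp, complete_subT c, ⟨by simp, hc, rfl, trivial⟩, trivial⟩
  | c :: d :: v, _, h, hc => by
    refine ⟨by simp, complete_subT c, ?_, trivial⟩
    exact goT_complete (d :: v) (by simp) _ ⟨by simp, hc, rfl, trivial⟩

lemma goT_yield : ∀ (v : List (Fin 2)), v ≠ [] → ∀ (h : Tr),
    yield (goT v h) = v ++ yield h ++ v
  | [c], _, h => by simp [goT, yield, yields, subT, leafT]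
  | c :: d :: v, _, h => by
    have ih := goT_yield (d :: v) (by simp) (LTree.node (.anode ()) [h, leafT c])
    have h2 : yield (LTree.node (.anode ()) [h, leafT c] : Tr) = yield h ++ [c] := by
      simp [yield, yields, leafT]
    rw [h2] at ih
    have h3 : yield (goT (c :: d :: v) h) =
        yield (subT c) ++ (yield (goT (d :: v) (LTree.node (.anode ()) [h, leafT c])) ++ []) :=
      rfl
    rw [h3, ih, yield_subT]
    simp

lemma fullT_complete (c : Fin 2) (v : List (Fin 2)) : Complete (fullT c v) := by
  rcases eq_or_ne v [] with rfl | hv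
  · exact ⟨by simp [fullT], complete_subT c,
      ⟨by simp, rfl, trivial⟩, trivial⟩
  · refine ⟨by simp [fullT], complete_subT c, ?_, trivial⟩
    simp only [fullT, if_neg hv]
    exact goT_complete v hv _ ⟨by simp, rfl, trivial⟩

lemma fullT_yield (c : Fin 2) (v : List (Fin 2)) :
    yield (fullT c v) = (c :: v) ++ (c :: v) := by
  rcases eq_or_ne v [] with rfl | hv
  · simp [fullT, yield, yields, subT, leafT]
  · have h1 := goT_yield v hv (LTree.node (.anode ()) [leafT c])
    have : yield (LTree.node (.anode ()) [leafT c] : Tr) = [c] := by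
      simp [yield, yields, leafT]
    rw [this] at h1
    have h3 : yield (fullT c v) =
        yield (subT c) ++ (yield (goT v (LTree.node (.anode ()) [leafT c])) ++ []) := by
      simp only [fullT, if_neg hv]; rfl
    rw [h3, h1, yield_subT]
    simp

end CopyAux

open CopyAux LTree in
/-- The copy grammar, where adjunction is only allowed at the marked nodes (T),
generates exactly the copy language { w w : w ∈ {a,b}⁺ }. -/
theorem copyGrammar_generates_copy_language :
    copyGrammar.language = {x | ∃ w : List (Fin 2), w ≠ [] ∧ x = w ++ w} := by
  ext x
  simp only [LTAG0.language, Set.mem_setOf_eq]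
  constructor
  · rintro ⟨t, hd, hroot, hcomp, rfl⟩
    have hs := derived_shape hd
    have hss : SShape t := by
      rcases hs with ⟨c, rfl⟩ | hs | ⟨v, hg⟩
      · exfalso
        simp only [copyGrammar] at hroot
        rw [show rootLabel (subT c) = .nonterm (NSof c) from rfl] at hroot
        exact NSof_ne_S c (by injection hroot)
      · exact hs
      · rw [go_root hg] at hroot; cases hroot
    clear hs hroot hd
    cases hss with
    | base c x hx =>
      obtain ⟨-, hcx, ⟨-, hcl, -⟩, -⟩ := hcomp
      obtain rfl := complete_IsX hx hcx
      refine ⟨[c], by simp, ?_⟩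
      simp [yield, yields, subT, leafT]
    | adjoined c x v t hx hg =>
      obtain ⟨-, hcx, hct, -⟩ := hcomp
      obtain rfl := complete_IsX hx hcx
      have hy := go_yield hg hct
      have : yield (LTree.node (.anode ()) [leafT c] : Tr) = [c] := by
        simp [yield, yields, leafT]
      rw [this] at hy
      refine ⟨c :: v, by simp, ?_⟩
      simp only [yield, yields, subT, leafT, hy, List.append_nil]
      simp
  · rintro ⟨w, hw, rfl⟩
    obtain ⟨c, v, rfl⟩ : ∃ c v, w = c :: v := by
      cases w with
      | nil => exact absurd rfl hw
      | cons c v => exact ⟨c, v, rfl⟩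
    exact ⟨fullT c v, fullT_derived c v, rfl, fullT_complete c v, fullT_yield c v⟩
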